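/- Let α and β be real algebraic numbers, each of degree at least three over ℚ, such that 1, α, β are linearly independent over ℚ. Then for every k > 1 and every s > 2, lim_{N→∞} log(Z_N(α, β, s))/(s N^k) = 0; that is, (α, β) has a k-free energy limit equal to zero for every k > 1. -/

import Mathlib

open Matrix Filter

noncomputable section

/-- The matrix `A₀` with rows (0,0,1), (1,0,−1), (0,1,0). -/
def A0 : Matrix (Fin 3) (Fin 3) ℝ := !![0,0,1; 1,0,-1; 0,1,0]

/-- The matrix `A₁` with rows (1,0,0), (0,1,0), (−1,0,1). -/
def A1 : Matrix (Fin 3) (Fin 3) ℝ := !![1,0,0; 0,1,0; -1,0,1]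

/-- `Amat 0 = A₀`, `Amat 1 = A₁`. -/
def Amat : Fin 2 → Matrix (Fin 3) (Fin 3) ℝ := ![A0, A1]

/-- The matrix `M` with rows (0,0,1), (0,0,α), (0,0,β). -/
def Mmat (α β : ℝ) : Matrix (Fin 3) (Fin 3) ℝ := !![0,0,1; 0,0,α; 0,0,β]

/-- Hilbert–Schmidt (Hadamard) product `A*B = Tr(A Bᵀ)`. -/
def HS (A B : Matrix (Fin 3) (Fin 3) ℝ) : ℝ := (A * Bᵀ).trace

/-- `A^I = A_{σ₁} A_{σ₂} ⋯ A_{σ_N}` for a state `I = (σ₁,…,σ_N) ∈ {0,1}^N`. -/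
def AI {N : ℕ} (I : Fin N → Fin 2) : Matrix (Fin 3) (Fin 3) ℝ :=
  (List.ofFn fun i => Amat (I i)).prod

/-- The partition function `Z_N(α, β, s) = Σ_{I ∈ 𝒮_N} 1/|M*A^I|^s`. -/
def Z (N : ℕ) (α β s : ℝ) : ℝ :=
  ∑ I : Fin N → Fin 2, 1 / |HS (Mmat α β) (AI I)| ^ s
set_option maxHeartbeats 1600000 in
open IntermediateField in
theorem liouville_bound (α β : ℝ) (hα : IsAlgebraic ℚ α) (hβ : IsAlgebraic ℚ β) :
    ∃ (c : ℝ) (D : ℕ), 0 < c ∧ ∀ (p q r : ℤ) (H : ℝ), 1 ≤ H →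
      |(p:ℝ)| ≤ H → |(q:ℝ)| ≤ H → |(r:ℝ)| ≤ H →
      ((p:ℝ) + (q:ℝ)*α + (r:ℝ)*β ≠ 0) →
      c / H^D ≤ |(p:ℝ) + (q:ℝ)*α + (r:ℝ)*β| := by
  set K := IntermediateField.adjoin ℚ ({α, β} : Set ℝ) with hK
  haveI : FiniteDimensional ℚ K := by
    apply IntermediateField.finiteDimensional_adjoin
    rintro x hx
    rcases hx with h | h
    · subst h; exact hα.isIntegral
    · rw [Set.mem_singleton_iff] at h; subst h; exact hβ.isIntegral
  set αK : K := ⟨α, IntermediateField.subset_adjoin ℚ _ (by simp)⟩ with hαK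
  set βK : K := ⟨β, IntermediateField.subset_adjoin ℚ _ (by simp)⟩ with hβK
  -- integer multiples that are integral over ℤ
  have halgα : IsAlgebraic ℤ αK := by
    rw [IsFractionRing.isAlgebraic_iff ℤ ℚ K]
    exact Algebra.IsAlgebraic.isAlgebraic αK
  have halgβ : IsAlgebraic ℤ βK := by
    rw [IsFractionRing.isAlgebraic_iff ℤ ℚ K]
    exact Algebra.IsAlgebraic.isAlgebraic βK
  obtain ⟨x₁, n₁, hn₁, hx₁⟩ : ∃ x : integralClosure ℤ K, ∃ y ≠ (0:ℤ), αK * algebraMap ℤ K y = (x : K) := by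
    obtain ⟨y, hy, hi⟩ := halgα.exists_integral_multiple
    exact ⟨⟨y • αK, hi⟩, y, hy, (mul_comm _ _).trans (Algebra.smul_def y αK).symm⟩
  obtain ⟨x₂, n₂, hn₂, hx₂⟩ : ∃ x : integralClosure ℤ K, ∃ y ≠ (0:ℤ), βK * algebraMap ℤ K y = (x : K) := by
    obtain ⟨y, hy, hi⟩ := halgβ.exists_integral_multiple
    exact ⟨⟨y • βK, hi⟩, y, hy, (mul_comm _ _).trans (Algebra.smul_def y βK).symm⟩
  set n : ℤ := n₁ * n₂ with hn
  have hnne : n ≠ 0 := mul_ne_zero hn₁ hn₂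
  set α' : K := (n : K) * αK with hα'
  set β' : K := (n : K) * βK with hβ'
  have hintα' : IsIntegral ℤ α' := by
    have : α' = (n₂ : K) * (x₁ : K) := by
      rw [hα', ← hx₁, algebraMap_int_eq]; push_cast [hn, Int.coe_castRingHom]; ring
    rw [this]
    exact (isIntegral_algebraMap (R := ℤ) (x := n₂)).mul x₁.2
  have hintβ' : IsIntegral ℤ β' := by
    have : β' = (n₁ : K) * (x₂ : K) := by
      rw [hβ', ← hx₂, algebraMap_int_eq]; push_cast [hn, Int.coe_castRingHom]; ring
    rw [this]
    exact (isIntegral_algebraMap (R := ℤ) (x := n₁)).mul x₂.2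
  -- embeddings into ℂ
  set D : ℕ := Fintype.card (K →ₐ[ℚ] ℂ) with hD
  set σ₀ : K →ₐ[ℚ] ℂ := (Complex.ofRealAm.restrictScalars ℚ).comp (IntermediateField.val K) with hσ₀
  -- bound on conjugates
  set B : ℝ := 1 + |(n:ℝ)| + ∑ σ : K →ₐ[ℚ] ℂ, (‖σ α'‖ + ‖σ β'‖) with hB
  have hB1 : (1:ℝ) ≤ B := by
    have : (0:ℝ) ≤ ∑ σ : K →ₐ[ℚ] ℂ, (‖σ α'‖ + ‖σ β'‖) :=
      Finset.sum_nonneg fun σ _ => by positivity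
    have := abs_nonneg (n:ℝ)
    simp only [hB]; linarith
  have hBα : ∀ σ : K →ₐ[ℚ] ℂ, ‖σ α'‖ ≤ B := by
    intro σ
    have h1 : ‖σ α'‖ + ‖σ β'‖ ≤ ∑ τ : K →ₐ[ℚ] ℂ, (‖τ α'‖ + ‖τ β'‖) :=
      Finset.single_le_sum (f := fun τ : K →ₐ[ℚ] ℂ => (‖τ α'‖ + ‖τ β'‖))
        (fun τ _ => by positivity) (Finset.mem_univ σ)
    have := norm_nonneg (σ β')
    have := abs_nonneg (n:ℝ)
    simp only [hB]; linarith
  have hBβ : ∀ σ : K →ₐ[ℚ] ℂ, ‖σ β'‖ ≤ B := by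
    intro σ
    have h1 : ‖σ α'‖ + ‖σ β'‖ ≤ ∑ τ : K →ₐ[ℚ] ℂ, (‖τ α'‖ + ‖τ β'‖) :=
      Finset.single_le_sum (f := fun τ : K →ₐ[ℚ] ℂ => (‖τ α'‖ + ‖τ β'‖))
        (fun τ _ => by positivity) (Finset.mem_univ σ)
    have := norm_nonneg (σ α')
    simp only [hB]; linarith [abs_nonneg (n:ℝ)]
  have hBn : |(n:ℝ)| ≤ B := by
    have : (0:ℝ) ≤ ∑ σ : K →ₐ[ℚ] ℂ, (‖σ α'‖ + ‖σ β'‖) :=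
      Finset.sum_nonneg fun σ _ => by positivity
    simp only [hB]; linarith
  have hnpos0 : (0:ℝ) < |(n:ℝ)| := abs_pos.mpr (by exact_mod_cast hnne)
  refine ⟨1 / (|(n:ℝ)| * (3*B)^D), D,
    div_pos one_pos (mul_pos hnpos0 (pow_pos (by linarith) D)), ?_⟩
  intro p q r H hH1 hpH hqH hrH hne
  -- the element ξ and η = n ξ
  set ξ : K := (p : K) + (q : K) * αK + (r : K) * βK with hξ
  have hξval : (ξ : ℝ) = (p:ℝ) + (q:ℝ)*α + (r:ℝ)*β := by
    push_cast [hξ]; rfl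
  set η : K := (n : K) * ξ with hη
  have hηval : (η : ℝ) = (n:ℝ) * ((p:ℝ) + (q:ℝ)*α + (r:ℝ)*β) := by
    push_cast [hη, hξval]; rfl
  have hηne : η ≠ 0 := by
    intro h
    have : (η : ℝ) = 0 := by rw [h]; rfl
    rw [hηval] at this
    rcases mul_eq_zero.mp this with h' | h'
    · exact hnne (by exact_mod_cast h')
    · exact hne h'
  have hηeq : η = (p : K) * (n : K) + (q : K) * α' + (r : K) * β' := by
    rw [hη, hξ, hα', hβ']; ring
  have hηint : IsIntegral ℤ η := by
    rw [hηeq]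
    refine IsIntegral.add (IsIntegral.add ?_ ?_) ?_
    · exact (isIntegral_algebraMap (R := ℤ) (x := p)).mul (isIntegral_algebraMap (R := ℤ) (x := n))
    · exact (isIntegral_algebraMap (R := ℤ) (x := q)).mul hintα'
    · exact (isIntegral_algebraMap (R := ℤ) (x := r)).mul hintβ'
  -- the norm is a nonzero integer
  have hNormInt : IsIntegral ℤ (Algebra.norm ℚ η) := Algebra.isIntegral_norm (K := ℚ) hηint
  obtain ⟨m, hm⟩ := IsIntegrallyClosed.isIntegral_iff.mp hNormInt
  have hNzero : Algebra.norm ℚ η ≠ 0 := by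
    rw [Algebra.norm_ne_zero_iff]; exact hηne
  have hmne : m ≠ 0 := by
    intro h; apply hNzero; rw [← hm, h, map_zero]
  have h1leN : (1:ℝ) ≤ |((Algebra.norm ℚ η : ℚ) : ℝ)| := by
    have h2 : (1:ℝ) ≤ |(m:ℝ)| := by exact_mod_cast Int.one_le_abs hmne
    rw [← hm, algebraMap_int_eq, Int.coe_castRingHom]
    push_cast
    exact h2
  -- product formula
  have hprod : ((Algebra.norm ℚ η : ℚ) : ℂ) = ∏ σ : K →ₐ[ℚ] ℂ, σ η := by
    have := Algebra.norm_eq_prod_embeddings ℚ ℂ η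
    rw [← this]; norm_num
  have hnormprod : |((Algebra.norm ℚ η : ℚ) : ℝ)| = ∏ σ : K →ₐ[ℚ] ℂ, ‖σ η‖ := by
    rw [← norm_prod, ← hprod]
    rw [show ((Algebra.norm ℚ η : ℚ) : ℂ) = (((Algebra.norm ℚ η : ℚ) : ℝ) : ℂ) by push_cast; rfl]
    rw [Complex.norm_real, Real.norm_eq_abs]
  classical
  -- bound on each conjugate
  have hσbound : ∀ σ : K →ₐ[ℚ] ℂ, ‖σ η‖ ≤ 3 * B * H := by
    intro σ
    have hσeq : σ η = (p : ℂ) * (n : ℂ) + (q : ℂ) * σ α' + (r : ℂ) * σ β' := by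
      rw [hηeq]; push_cast [map_add, _root_.map_mul, map_intCast]; ring
    have habs : ∀ z : ℤ, ‖(z : ℂ)‖ = |(z:ℝ)| := by
      intro z; rw [Complex.norm_intCast]
    have h1 : ‖(p : ℂ) * (n : ℂ)‖ ≤ H * B := by
      rw [norm_mul, habs, habs]
      exact mul_le_mul hpH hBn (abs_nonneg _) (le_trans (abs_nonneg _) hpH)
    have h2 : ‖(q : ℂ) * σ α'‖ ≤ H * B := by
      rw [norm_mul, habs]
      exact mul_le_mul hqH (hBα σ) (norm_nonneg _) (le_trans (abs_nonneg _) hqH)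
    have h3 : ‖(r : ℂ) * σ β'‖ ≤ H * B := by
      rw [norm_mul, habs]
      exact mul_le_mul hrH (hBβ σ) (norm_nonneg _) (le_trans (abs_nonneg _) hrH)
    calc ‖σ η‖ = ‖(p : ℂ) * (n : ℂ) + (q : ℂ) * σ α' + (r : ℂ) * σ β'‖ := by rw [hσeq]
      _ ≤ ‖(p : ℂ) * (n : ℂ) + (q : ℂ) * σ α'‖ + ‖(r : ℂ) * σ β'‖ := norm_add_le _ _
      _ ≤ (‖(p : ℂ) * (n : ℂ)‖ + ‖(q : ℂ) * σ α'‖) + ‖(r : ℂ) * σ β'‖ := by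
          exact add_le_add_left (norm_add_le _ _) _
      _ ≤ (H * B + H * B) + H * B := by gcongr
      _ = 3 * B * H := by ring
  have hσ₀η : ‖σ₀ η‖ = |(n:ℝ)| * |(p:ℝ) + (q:ℝ)*α + (r:ℝ)*β| := by
    have h : σ₀ η = ((η : ℝ) : ℂ) := rfl
    rw [h, Complex.norm_real, Real.norm_eq_abs, hηval, abs_mul]
  have h3BH1 : (1:ℝ) ≤ 3 * B * H := by nlinarith
  have hprodbound : ∏ σ ∈ Finset.univ.erase σ₀, ‖σ η‖ ≤ (3*B*H)^D := by
    calc ∏ σ ∈ Finset.univ.erase σ₀, ‖σ η‖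
        ≤ ∏ _σ ∈ Finset.univ.erase σ₀, (3*B*H) :=
          Finset.prod_le_prod (fun σ _ => norm_nonneg _) (fun σ _ => hσbound σ)
      _ = (3*B*H) ^ (Finset.univ.erase σ₀).card := by rw [Finset.prod_const]
      _ ≤ (3*B*H)^D := pow_le_pow_right₀ h3BH1 (Finset.card_le_univ _)
  have key : (1:ℝ) ≤ |(n:ℝ)| * |(p:ℝ) + (q:ℝ)*α + (r:ℝ)*β| * ((3*B*H)^D) := by
    calc (1:ℝ) ≤ |((Algebra.norm ℚ η : ℚ) : ℝ)| := h1leN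
      _ = ∏ σ : K →ₐ[ℚ] ℂ, ‖σ η‖ := hnormprod
      _ = ‖σ₀ η‖ * ∏ σ ∈ Finset.univ.erase σ₀, ‖σ η‖ :=
          (Finset.mul_prod_erase _ _ (Finset.mem_univ σ₀)).symm
      _ ≤ ‖σ₀ η‖ * (3*B*H)^D := mul_le_mul_of_nonneg_left hprodbound (norm_nonneg _)
      _ = |(n:ℝ)| * |(p:ℝ) + (q:ℝ)*α + (r:ℝ)*β| * ((3*B*H)^D) := by rw [hσ₀η]
  have hXpos : 0 < |(p:ℝ) + (q:ℝ)*α + (r:ℝ)*β| := abs_pos.mpr hne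
  have hnpos : (0:ℝ) < |(n:ℝ)| := abs_pos.mpr (by exact_mod_cast hnne)
  have hHpos : (0:ℝ) < H := lt_of_lt_of_le one_pos hH1
  have hposden : (0:ℝ) < |(n:ℝ)| * (3*B)^D * H^D :=
    mul_pos (mul_pos hnpos (pow_pos (by linarith) D)) (pow_pos hHpos D)
  rw [div_div, div_le_iff₀ hposden]
  have hexp : (3*B*H)^D = (3*B)^D * H^D := by rw [← mul_pow]
  rw [hexp] at key
  nlinarith [key]

def A0z : Matrix (Fin 3) (Fin 3) ℤ := !![0,0,1; 1,0,-1; 0,1,0]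
def A1z : Matrix (Fin 3) (Fin 3) ℤ := !![1,0,0; 0,1,0; -1,0,1]
def Amatz : Fin 2 → Matrix (Fin 3) (Fin 3) ℤ := ![A0z, A1z]
def AIz {N : ℕ} (I : Fin N → Fin 2) : Matrix (Fin 3) (Fin 3) ℤ :=
  (List.ofFn fun i => Amatz (I i)).prod

lemma Amat_eq_map (σ : Fin 2) : Amat σ = (Amatz σ).map (Int.cast : ℤ → ℝ) := by
  fin_cases σ <;>
    · ext i j
      fin_cases i <;> fin_cases j <;>
        simp [Amat, Amatz, A0, A1, A0z, A1z, Matrix.map_apply]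

lemma AI_eq {N : ℕ} (I : Fin N → Fin 2) :
    AI I = (AIz I).map (Int.cast : ℤ → ℝ) := by
  have h : (AIz I).map (Int.cast : ℤ → ℝ)
      = (Int.castRingHom ℝ).mapMatrix (AIz I) := rfl
  rw [h, AIz, map_list_prod, AI, List.map_ofFn]
  refine congrArg List.prod (congrArg List.ofFn (funext fun i => ?_))
  simp only [Function.comp_apply, RingHom.mapMatrix_apply]
  exact Amat_eq_map (I i)

lemma Amat_mem (σ : Fin 2) : Amat σ = A0 ∨ Amat σ = A1 := by
  fin_cases σ
  · left; rfl
  · right; rfl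

lemma abs_prod_le (L : List (Matrix (Fin 3) (Fin 3) ℝ)) (hL : ∀ A ∈ L, A = A0 ∨ A = A1) :
    ∀ i j, |L.prod i j| ≤ 2 ^ L.length := by
  induction L with
  | nil =>
    intro i j
    simp only [List.prod_nil, List.length_nil, pow_zero]
    rw [Matrix.one_apply]
    split <;> norm_num
  | cons A t ih =>
    intro i j
    have hA := hL A List.mem_cons_self
    have ht := fun B hB => hL B (List.mem_cons_of_mem _ hB)
    rw [List.prod_cons]
    rw [show (A * t.prod) i j = ∑ k, A i k * t.prod k j from Matrix.mul_apply]
    calc |∑ k, A i k * t.prod k j| ≤ ∑ k, |A i k * t.prod k j| :=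
          Finset.abs_sum_le_sum_abs _ _
      _ = ∑ k, |A i k| * |t.prod k j| := by simp [abs_mul]
      _ ≤ ∑ k, |A i k| * 2 ^ t.length := by
          apply Finset.sum_le_sum; intro k _
          exact mul_le_mul_of_nonneg_left (ih ht k j) (abs_nonneg _)
      _ = (∑ k, |A i k|) * 2 ^ t.length := by rw [← Finset.sum_mul]
      _ ≤ 2 * 2 ^ t.length := by
          apply mul_le_mul_of_nonneg_right _ (by positivity)
          rcases hA with h | h <;> subst h <;> fin_cases i <;>
            · simp [A0, A1, Fin.sum_univ_three]; try norm_num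
      _ = 2 ^ (A :: t).length := by rw [List.length_cons]; ring
  
lemma det_Amat (σ : Fin 2) : (Amat σ).det = 1 := by
  fin_cases σ <;> simp [Amat, A0, A1, Matrix.det_fin_three]

lemma det_AI {N : ℕ} (I : Fin N → Fin 2) : (AI I).det = 1 := by
  rw [AI, ← Matrix.coe_detMonoidHom, map_list_prod]
  apply List.prod_eq_one
  intro x hx
  rw [List.map_ofFn] at hx
  obtain ⟨i, hi⟩ := Set.mem_range.mp ((List.mem_ofFn' _ _).mp hx)
  rw [← hi]
  exact det_Amat (I i)

lemma HS_eq (α β : ℝ) (B : Matrix (Fin 3) (Fin 3) ℝ) :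
    HS (Mmat α β) B = B 0 2 + α * B 1 2 + β * B 2 2 := by
  simp [HS, Mmat, Matrix.trace, Matrix.mul_apply, Matrix.diag, Fin.sum_univ_three]

lemma abs_AI_le {N : ℕ} (I : Fin N → Fin 2) (i j : Fin 3) : |AI I i j| ≤ 2 ^ N := by
  have h := abs_prod_le (List.ofFn fun i => Amat (I i)) ?_ i j
  · rwa [List.length_ofFn] at h
  · intro A hA
    obtain ⟨i, hi⟩ := Set.mem_range.mp ((List.mem_ofFn' _ _).mp hA)
    rw [← hi]; exact Amat_mem (I i)

lemma key_facts (α β : ℝ) (hli : LinearIndependent ℚ ![(1:ℝ), α, β])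
    {N : ℕ} (I : Fin N → Fin 2) :
    ∃ p q r : ℤ, HS (Mmat α β) (AI I) = (p:ℝ) + (q:ℝ)*α + (r:ℝ)*β ∧
      |(p:ℝ)| ≤ 2^N ∧ |(q:ℝ)| ≤ 2^N ∧ |(r:ℝ)| ≤ 2^N ∧ HS (Mmat α β) (AI I) ≠ 0 := by
  refine ⟨AIz I 0 2, AIz I 1 2, AIz I 2 2, ?_, ?_, ?_, ?_, ?_⟩
  case _ =>
    rw [HS_eq, AI_eq]
    simp [Matrix.map_apply]
    ring
  case _ => have := abs_AI_le I 0 2; rwa [AI_eq, Matrix.map_apply] at this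
  case _ => have := abs_AI_le I 1 2; rwa [AI_eq, Matrix.map_apply] at this
  case _ => have := abs_AI_le I 2 2; rwa [AI_eq, Matrix.map_apply] at this
  case _ =>
    intro hzero
    rw [HS_eq, AI_eq] at hzero
    simp only [Matrix.map_apply] at hzero
    -- linear independence gives all coefficients zero
    have hall := Fintype.linearIndependent_iff.mp hli
      ![(AIz I 0 2 : ℚ), (AIz I 1 2 : ℚ), (AIz I 2 2 : ℚ)] ?_
    · have h0 : (AIz I 0 2 : ℚ) = 0 := hall 0
      have h1 : (AIz I 1 2 : ℚ) = 0 := hall 1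
      have h2 : (AIz I 2 2 : ℚ) = 0 := hall 2
      have hz0 : (AIz I 0 2 : ℤ) = 0 := by exact_mod_cast h0
      have hz1 : (AIz I 1 2 : ℤ) = 0 := by exact_mod_cast h1
      have hz2 : (AIz I 2 2 : ℤ) = 0 := by exact_mod_cast h2
      have hdet0 : (AI I).det = 0 := by
        apply Matrix.det_eq_zero_of_column_eq_zero 2
        intro i
        rw [AI_eq, Matrix.map_apply]
        fin_cases i <;> simp [hz0, hz1, hz2]
      rw [det_AI] at hdet0
      exact one_ne_zero hdet0
    · rw [Fin.sum_univ_three]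
      simp only [Matrix.cons_val_zero, Matrix.cons_val_one, Matrix.head_cons,
        Matrix.cons_val_two, Matrix.tail_cons]
      rw [Rat.smul_def, Rat.smul_def, Rat.smul_def]
      push_cast
      linarith [hzero]

/-- If `α` and `β` are real algebraic numbers of degree at least three over `ℚ`
such that `1, α, β` are linearly independent over `ℚ`, then the pair `(α, β)` has
`k`-free energy limit equal to zero for every `k > 1` (taking `s > 2`). -/
theorem algebraic_pair_k_free_energy_limit_zero (α β : ℝ)
    (hα : IsAlgebraic ℚ α) (hβ : IsAlgebraic ℚ β)
    (hdegα : 3 ≤ (minpoly ℚ α).natDegree) (hdegβ : 3 ≤ (minpoly ℚ β).natDegree)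
    (hli : LinearIndependent ℚ ![(1 : ℝ), α, β]) :
    ∀ k : ℝ, 1 < k → ∀ s : ℝ, 2 < s →
      Filter.Tendsto (fun N : ℕ => Real.log (Z N α β s) / (s * (N : ℝ) ^ k))
        Filter.atTop (nhds 0) := by
  intro k hk s hs
  have hs0 : (0:ℝ) < s := by linarith
  obtain ⟨c, D, hc, hLiou⟩ := liouville_bound α β hα hβ
  set Cu : ℝ := 1 + |α| + |β| with hCu
  have hCu1 : (1:ℝ) ≤ Cu := by
    have := abs_nonneg α; have := abs_nonneg β; simp only [hCu]; linarith
  -- per term bounds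
  have hterm : ∀ N : ℕ, ∀ I : Fin N → Fin 2,
      c / ((2:ℝ)^N)^D ≤ |HS (Mmat α β) (AI I)| ∧
      |HS (Mmat α β) (AI I)| ≤ Cu * 2^N := by
    intro N I
    obtain ⟨p, q, r, heq, hp, hq, hr, hne⟩ := key_facts α β hli I
    have h2N : (1:ℝ) ≤ 2^N := one_le_pow₀ (by norm_num)
    constructor
    · rw [heq]
      exact hLiou p q r (2^N) h2N hp hq hr (heq ▸ hne)
    · rw [heq]
      calc |(p:ℝ) + (q:ℝ)*α + (r:ℝ)*β| ≤ |(p:ℝ)| + |(q:ℝ)| * |α| + |(r:ℝ)| * |β| := by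
            calc |(p:ℝ) + (q:ℝ)*α + (r:ℝ)*β| ≤ |(p:ℝ) + (q:ℝ)*α| + |(r:ℝ)*β| := abs_add_le _ _
              _ ≤ |(p:ℝ)| + |(q:ℝ)*α| + |(r:ℝ)*β| := by linarith [abs_add_le ((p:ℝ)) ((q:ℝ)*α)]
              _ = |(p:ℝ)| + |(q:ℝ)| * |α| + |(r:ℝ)| * |β| := by rw [abs_mul, abs_mul]
        _ ≤ 2^N + 2^N * |α| + 2^N * |β| := by
            have h1 : |(q:ℝ)| * |α| ≤ 2^N * |α| :=
              mul_le_mul_of_nonneg_right hq (abs_nonneg _)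
            have h2 : |(r:ℝ)| * |β| ≤ 2^N * |β| :=
              mul_le_mul_of_nonneg_right hr (abs_nonneg _)
            linarith
        _ = Cu * 2^N := by rw [hCu]; ring
  have hlowpos : ∀ N : ℕ, (0:ℝ) < c / ((2:ℝ)^N)^D := fun N => by positivity
  have huppos : ∀ N : ℕ, (0:ℝ) < Cu * 2^N := fun N => by positivity
  -- Z bounds
  have hZup : ∀ N : ℕ, Z N α β s ≤ 2^N * (1 / (c / ((2:ℝ)^N)^D) ^ s) := by
    intro N
    have hb : ∀ I : Fin N → Fin 2, 1 / |HS (Mmat α β) (AI I)| ^ s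
        ≤ 1 / (c / ((2:ℝ)^N)^D) ^ s := by
      intro I
      apply one_div_le_one_div_of_le (Real.rpow_pos_of_pos (hlowpos N) s)
      exact Real.rpow_le_rpow (le_of_lt (hlowpos N)) (hterm N I).1 (le_of_lt hs0)
    calc Z N α β s ≤ ∑ _I : Fin N → Fin 2, 1 / (c / ((2:ℝ)^N)^D) ^ s :=
          Finset.sum_le_sum (fun I _ => hb I)
      _ = 2^N * (1 / (c / ((2:ℝ)^N)^D) ^ s) := by
          rw [Finset.sum_const, nsmul_eq_mul]
          congr 1
          simp [Fintype.card_fun]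
  have hZlow : ∀ N : ℕ, 1 / (Cu * 2^N) ^ s ≤ Z N α β s := by
    intro N
    have hb : 1 / (Cu * 2^N) ^ s ≤ 1 / |HS (Mmat α β) (AI (fun _ : Fin N => 0))| ^ s := by
      have h := hterm N (fun _ => 0)
      have habs : 0 < |HS (Mmat α β) (AI (fun _ : Fin N => 0))| :=
        lt_of_lt_of_le (hlowpos N) h.1
      apply one_div_le_one_div_of_le (Real.rpow_pos_of_pos habs s)
      exact Real.rpow_le_rpow (le_of_lt habs) h.2 (le_of_lt hs0)
    refine le_trans hb ?_
    apply Finset.single_le_sum (f := fun I : Fin N → Fin 2 => 1 / |HS (Mmat α β) (AI I)| ^ s)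
      (fun I _ => by positivity) (Finset.mem_univ _)
  have hZpos : ∀ N : ℕ, 0 < Z N α β s := fun N =>
    lt_of_lt_of_le (by positivity) (hZlow N)
  -- log bounds
  set C₁ : ℝ := s * |Real.log c| + s * |Real.log Cu| with hC₁
  set C₂ : ℝ := Real.log 2 + s * D * Real.log 2 + s * Real.log 2 with hC₂
  have hlog2 : (0:ℝ) ≤ Real.log 2 := Real.log_nonneg (by norm_num)
  have hC₁0 : 0 ≤ C₁ := by positivity
  have hC₂0 : 0 ≤ C₂ := by positivity
  have hlogZ : ∀ N : ℕ, |Real.log (Z N α β s)| ≤ C₁ + C₂ * N := by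
    intro N
    have hup : Real.log (Z N α β s) ≤ N * Real.log 2 + s * D * N * Real.log 2
        - s * Real.log c := by
      calc Real.log (Z N α β s) ≤ Real.log (2^N * (1 / (c / ((2:ℝ)^N)^D) ^ s)) :=
            Real.log_le_log (hZpos N) (hZup N)
        _ = N * Real.log 2 + s * D * N * Real.log 2 - s * Real.log c := by
            rw [Real.log_mul (by positivity) (by positivity)]
            rw [one_div, Real.log_inv, Real.log_rpow (hlowpos N)]
            rw [Real.log_div (ne_of_gt hc) (by positivity)]
            simp only [Real.log_pow]
            push_cast
            ring
    have hlo : -(s * Real.log Cu + s * N * Real.log 2) ≤ Real.log (Z N α β s) := by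
      calc -(s * Real.log Cu + s * N * Real.log 2)
          = Real.log (1 / (Cu * 2^N) ^ s) := by
            rw [one_div, Real.log_inv, Real.log_rpow (huppos N),
              Real.log_mul (by positivity) (by positivity), Real.log_pow]
            push_cast
            ring
        _ ≤ Real.log (Z N α β s) := Real.log_le_log (by positivity) (hZlow N)
    rw [abs_le]
    have hlec' := neg_abs_le (Real.log c)
    have hleu := le_abs_self (Real.log Cu)
    have hN0 : (0:ℝ) ≤ N := Nat.cast_nonneg N
    constructor
    · rw [hC₁, hC₂]
      have h1 : s * Real.log Cu ≤ s * |Real.log Cu| := mul_le_mul_of_nonneg_left hleu hs0.le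
      have h2 : 0 ≤ s * |Real.log c| := mul_nonneg hs0.le (abs_nonneg _)
      have h3 : 0 ≤ Real.log 2 * N := mul_nonneg hlog2 hN0
      have h4 : 0 ≤ s * D * Real.log 2 * N := by positivity
      linarith [hlo]
    · rw [hC₁, hC₂]
      have h1 : s * (-|Real.log c|) ≤ s * Real.log c := mul_le_mul_of_nonneg_left hlec' hs0.le
      have h2 : 0 ≤ s * |Real.log Cu| := mul_nonneg hs0.le (abs_nonneg _)
      have h3 : 0 ≤ s * Real.log 2 * N := by positivity
      linarith [hup]
  -- squeeze
  have hg : Filter.Tendsto (fun N : ℕ => ((C₁ + C₂)/s) * (N:ℝ)^(1-k))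
      Filter.atTop (nhds 0) := by
    have h1 : Filter.Tendsto (fun N : ℕ => ((N:ℝ))^(1-k)) Filter.atTop (nhds 0) := by
      have h2 : Filter.Tendsto (fun x : ℝ => x^(-(k-1))) Filter.atTop (nhds 0) :=
        tendsto_rpow_neg_atTop (by linarith)
      have h3 := h2.comp tendsto_natCast_atTop_atTop (α := ℕ)
      convert h3 using 2 with N
      simp [Function.comp]
    simpa using h1.const_mul ((C₁ + C₂)/s)
  apply squeeze_zero_norm' ?_ hg
  filter_upwards [Filter.eventually_ge_atTop 1] with N hN
  have hx1 : (1:ℝ) ≤ (N:ℝ) := by exact_mod_cast hN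
  have hx0 : (0:ℝ) < (N:ℝ) := by linarith
  have hxk : (0:ℝ) < (N:ℝ)^k := Real.rpow_pos_of_pos hx0 k
  have hden : (0:ℝ) < s * (N:ℝ)^k := by positivity
  rw [Real.norm_eq_abs, abs_div, abs_of_pos hden]
  have hsub : ((N:ℝ))^(1-k) = (N:ℝ) / (N:ℝ)^k := by
    rw [Real.rpow_sub hx0, Real.rpow_one]
  rw [hsub]
  calc |Real.log (Z N α β s)| / (s * (N:ℝ)^k) ≤ (C₁ + C₂ * N) / (s * (N:ℝ)^k) := by
        apply div_le_div_of_nonneg_right (hlogZ N) hden.le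
    _ ≤ ((C₁ + C₂) * N) / (s * (N:ℝ)^k) := by
        apply div_le_div_of_nonneg_right ?_ hden.le
        nlinarith
    _ = ((C₁ + C₂)/s) * ((N:ℝ) / (N:ℝ)^k) := by
        field_simp
  

end
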